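/- For every integer n ≥ 2, δ_n² − (k_n(1, π/n))² = −4·δ_{2n}·(δ_{2n} − δ_n). -/

import Mathlib

open Finset Real

/-- `δ_n = (1/(4n))·∑_{l=1}^{n−1} 1/sin(πl/n) − 1`. -/
noncomputable def deltaN (n : ℕ) : ℝ :=
  (1 / (4 * (n : ℝ))) * ∑ l ∈ Finset.Icc 1 (n - 1), 1 / Real.sin (Real.pi * l / n) - 1

/-- `h_n(x,θ) = (1/n)·∑_{l=1}^{n} (1 − x·cos(2πl/n + θ))/(1 + x² − 2x·cos(2πl/n + θ))^{3/2}`. -/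
noncomputable def hN (n : ℕ) (x θ : ℝ) : ℝ :=
  (1 / (n : ℝ)) * ∑ l ∈ Finset.Icc 1 n,
    (1 - x * Real.cos (2 * Real.pi * l / n + θ)) /
      (1 + x ^ 2 - 2 * x * Real.cos (2 * Real.pi * l / n + θ)) ^ ((3 : ℝ) / 2)

/-- `k_n(x,θ) = h_n(x,θ) − 1`. -/
noncomputable def kN (n : ℕ) (x θ : ℝ) : ℝ := hN n x θ - 1


noncomputable def Ssum (N : ℕ) : ℝ := ∑ m ∈ Finset.range N, 1 / Real.sin (Real.pi * m / N)

noncomputable def Tsum (n : ℕ) : ℝ :=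
  ∑ j ∈ Finset.range n, 1 / Real.sin (Real.pi * (2 * (j : ℝ) + 1) / (2 * n))

lemma mylemma (b : ℝ) :
    (1 - Real.cos (2 * b)) / (2 - 2 * Real.cos (2 * b)) ^ ((3 : ℝ) / 2)
      = 1 / (4 * |Real.sin b|) := by
  have h1 : 1 - Real.cos (2 * b) = 2 * Real.sin b ^ 2 := by
    have := Real.cos_two_mul b
    have := Real.sin_sq_add_cos_sq b
    nlinarith
  have h2 : 2 - 2 * Real.cos (2 * b) = (2 * |Real.sin b|) ^ 2 := by
    rw [mul_pow, sq_abs]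
    nlinarith [Real.cos_two_mul b, Real.sin_sq_add_cos_sq b]
  rw [h1, h2]
  rcases eq_or_ne (Real.sin b) 0 with h | h
  · simp [h]
  · have habs : (0:ℝ) < |Real.sin b| := abs_pos.mpr h
    have hb : (0:ℝ) ≤ 2 * |Real.sin b| := by positivity
    have : ((2 * |Real.sin b|) ^ 2 : ℝ) ^ ((3:ℝ)/2) = (2 * |Real.sin b|) ^ (3:ℕ) := by
      rw [← Real.rpow_natCast (2 * |Real.sin b|) 2, ← Real.rpow_mul hb, ← Real.rpow_natCast (2 * |Real.sin b|) 3]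
      norm_num
    rw [this]
    have h2 : Real.sin b ^ 2 = |Real.sin b| ^ 2 := (sq_abs _).symm
    rw [h2]
    field_simp
    ring

lemma sum_range_two_mul' (n : ℕ) (f : ℕ → ℝ) :
    ∑ m ∈ Finset.range (2 * n), f m
      = ∑ j ∈ Finset.range n, f (2 * j) + ∑ j ∈ Finset.range n, f (2 * j + 1) := by
  induction n with
  | zero => simp
  | succ k ih =>
      have h : 2 * (k + 1) = (2 * k + 1) + 1 := by ring
      rw [h, Finset.sum_range_succ, Finset.sum_range_succ, Finset.sum_range_succ,
        Finset.sum_range_succ, ih]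
      ring

lemma Ssum_two_mul (n : ℕ) (hn : 2 ≤ n) : Ssum (2 * n) = Ssum n + Tsum n := by
  have hn0 : (n : ℝ) ≠ 0 := by positivity
  unfold Ssum Tsum
  rw [sum_range_two_mul']
  congr 1
  · apply Finset.sum_congr rfl
    intro j _
    congr 2
    push_cast
    field_simp
  · apply Finset.sum_congr rfl
    intro j _
    congr 2
    push_cast
    ring

lemma deltaN_eq (N : ℕ) (h : 1 ≤ N) : deltaN N = Ssum N / (4 * N) - 1 := by
  unfold deltaN Ssum
  have h0 : Finset.range N = insert 0 (Finset.Icc 1 (N - 1)) := by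
    ext m
    simp only [Finset.mem_range, Finset.mem_insert, Finset.mem_Icc]
    omega
  rw [h0, Finset.sum_insert (by simp)]
  simp only [Nat.cast_zero, mul_zero, zero_div, Real.sin_zero, div_zero, zero_add]
  ring

lemma hN_eq (n : ℕ) (hn : 2 ≤ n) : hN n 1 (Real.pi / n) = (1 / (4 * (n : ℝ))) * Tsum n := by
  have hn0 : (n : ℝ) ≠ 0 := by positivity
  have hn0' : (0:ℝ) < n := by positivity
  have hn2 : (2:ℝ) ≤ (n:ℝ) := by exact_mod_cast hn
  have key : ∀ l : ℕ,
      (1 - 1 * Real.cos (2 * Real.pi * l / n + Real.pi / n)) /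
        (1 + 1 ^ 2 - 2 * 1 * Real.cos (2 * Real.pi * l / n + Real.pi / n)) ^ ((3 : ℝ) / 2)
      = 1 / (4 * |Real.sin (Real.pi * (2 * (l : ℝ) + 1) / (2 * n))|) := by
    intro l
    have hang : 2 * Real.pi * l / n + Real.pi / n
        = 2 * (Real.pi * (2 * (l : ℝ) + 1) / (2 * n)) := by
      field_simp
    rw [hang]
    have h2 : (1 : ℝ) + 1 ^ 2 - 2 * 1 * Real.cos (2 * (Real.pi * (2 * (l : ℝ) + 1) / (2 * n)))
        = 2 - 2 * Real.cos (2 * (Real.pi * (2 * (l : ℝ) + 1) / (2 * n))) := by ring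
    rw [h2, one_mul]
    exact mylemma _
  unfold hN Tsum
  have hsum : ∑ l ∈ Finset.Icc 1 n,
      (1 - 1 * Real.cos (2 * Real.pi * l / n + Real.pi / n)) /
        (1 + 1 ^ 2 - 2 * 1 * Real.cos (2 * Real.pi * l / n + Real.pi / n)) ^ ((3 : ℝ) / 2)
      = (1 / 4) * ∑ j ∈ Finset.range n, 1 / Real.sin (Real.pi * (2 * (j : ℝ) + 1) / (2 * n)) := by
    have hIcc : Finset.Icc 1 n = insert n (Finset.Icc 1 (n - 1)) := by
      ext m
      simp only [Finset.mem_Icc, Finset.mem_insert]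
      omega
    have hrange : Finset.range n = insert 0 (Finset.Icc 1 (n - 1)) := by
      ext m
      simp only [Finset.mem_range, Finset.mem_insert, Finset.mem_Icc]
      omega
    rw [hIcc, hrange, Finset.sum_insert (by simp [Finset.mem_Icc]; omega),
      Finset.sum_insert (by simp), mul_add]
    congr 1
    · -- last term l = n matches j = 0 term
      rw [key n]
      have hb : Real.pi * (2 * (n : ℝ) + 1) / (2 * n) = Real.pi + Real.pi / (2 * n) := by
        field_simp
      have hs : Real.sin (Real.pi * (2 * (n : ℝ) + 1) / (2 * n))
          = - Real.sin (Real.pi / (2 * n)) := by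
        rw [hb, Real.sin_add]
        simp
      have hpos : 0 < Real.sin (Real.pi / (2 * n)) := by
        apply Real.sin_pos_of_pos_of_lt_pi
        · positivity
        · rw [div_lt_iff₀ (by positivity)]
          nlinarith [Real.pi_pos, hn2]
      rw [hs, abs_neg, abs_of_pos hpos]
      have h0 : Real.pi * (2 * ((0:ℕ) : ℝ) + 1) / (2 * n) = Real.pi / (2 * n) := by
        push_cast
        ring
      rw [h0]
      field_simp
    · -- middle terms
      rw [Finset.mul_sum]
      apply Finset.sum_congr rfl
      intro l hl
      simp only [Finset.mem_Icc] at hl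
      rw [key l]
      have hpos : 0 < Real.sin (Real.pi * (2 * (l : ℝ) + 1) / (2 * n)) := by
        apply Real.sin_pos_of_pos_of_lt_pi
        · have : (0:ℝ) < 2 * (l : ℝ) + 1 := by positivity
          positivity
        · rw [div_lt_iff₀ (by positivity)]
          have hl2 : (l : ℝ) ≤ (n : ℝ) - 1 := by
            have := hl.2
            have : (l : ℝ) ≤ ((n - 1 : ℕ) : ℝ) := by exact_mod_cast this
            have hcast : ((n - 1 : ℕ) : ℝ) = (n : ℝ) - 1 := by
              have : 1 ≤ n := by omega
              push_cast [this]
              ring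
            linarith [hcast ▸ this]
          nlinarith [Real.pi_pos, hn2]
      rw [abs_of_pos hpos]
      field_simp
  rw [hsum]
  ring

lemma kN_eq (n : ℕ) (hn : 2 ≤ n) : kN n 1 (Real.pi / n) = 2 * deltaN (2 * n) - deltaN n := by
  have hn0 : (n : ℝ) ≠ 0 := by positivity
  have h1 := deltaN_eq n (by omega)
  have h2 := deltaN_eq (2 * n) (by omega)
  have h3 := Ssum_two_mul n hn
  have h4 := hN_eq n hn
  have hc : ((2 * n : ℕ) : ℝ) = 2 * (n : ℝ) := by push_cast; ring
  rw [kN, h4, h1, h2, hc, h3]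
  field_simp
  ring

/-- `δ_n² − k_n(1,π/n)² = −4·δ_{2n}·(δ_{2n} − δ_n)`. -/
theorem deltaN_sq_sub_kN_sq (n : ℕ) (hn : 2 ≤ n) :
    deltaN n ^ 2 - kN n 1 (Real.pi / n) ^ 2 =
      -4 * deltaN (2 * n) * (deltaN (2 * n) - deltaN n) := by
  rw [kN_eq n hn]
  ring
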